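/- Fix θ₂ > 0 with θ₂ ≠ 0 and pairwise distinct points d₁ < d₂ < d₃ in [0, ∞). Then the three vectors v_j = (1, exp(d_j/θ₂) − 1, d_j exp(d_j/θ₂))ᵀ ∈ ℝ³ are linearly independent. -/

import Mathlib

open Real

theorem exp_model_gradients_linearly_independent (θ₂ d₁ d₂ d₃ : ℝ)
    (hθ : 0 < θ₂) (hθ' : θ₂ ≠ 0) (h₁ : 0 ≤ d₁) (h₁₂ : d₁ < d₂) (h₂₃ : d₂ < d₃) :
    LinearIndependent ℝ
      ![![(1 : ℝ), Real.exp (d₁ / θ₂) - 1, d₁ * Real.exp (d₁ / θ₂)],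
        ![(1 : ℝ), Real.exp (d₂ / θ₂) - 1, d₂ * Real.exp (d₂ / θ₂)],
        ![(1 : ℝ), Real.exp (d₃ / θ₂) - 1, d₃ * Real.exp (d₃ / θ₂)]] := by
  set A : Matrix (Fin 3) (Fin 3) ℝ :=
    !![(1 : ℝ), Real.exp (d₁ / θ₂) - 1, d₁ * Real.exp (d₁ / θ₂);
       (1 : ℝ), Real.exp (d₂ / θ₂) - 1, d₂ * Real.exp (d₂ / θ₂);
       (1 : ℝ), Real.exp (d₃ / θ₂) - 1, d₃ * Real.exp (d₃ / θ₂)] with hA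
  have hdet : A.det ≠ 0 := by
    rw [hA, Matrix.det_fin_three]
    simp only [Matrix.cons_val', Matrix.cons_val_zero, Matrix.cons_val_one, Matrix.head_cons,
      Matrix.empty_val', Matrix.cons_val_fin_one, Matrix.head_fin_const,
      Matrix.cons_val_two, Matrix.tail_cons, Matrix.of_apply]
    set e₁ := Real.exp (d₁ / θ₂) with he₁def
    set e₂ := Real.exp (d₂ / θ₂) with he₂def
    set e₃ := Real.exp (d₃ / θ₂) with he₃def
    have he₁ : 0 < e₁ := Real.exp_pos _
    have he₂ : 0 < e₂ := Real.exp_pos _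
    have he₃ : 0 < e₃ := Real.exp_pos _
    have hd13 : (0:ℝ) < d₃ - d₁ := by linarith
    have hd12 : (0:ℝ) < d₂ - d₁ := by linarith
    have hd23 : (0:ℝ) < d₃ - d₂ := by linarith
    have hne : -(d₁/θ₂) ≠ -(d₃/θ₂) := by
      have hd13' : d₁ < d₃ := h₁₂.trans h₂₃
      have : d₁ / θ₂ < d₃ / θ₂ := by gcongr
      intro h
      have := neg_injective h
      linarith
    have hab : (d₃-d₂)/(d₃-d₁) + (d₂-d₁)/(d₃-d₁) = 1 := by
      field_simp
      ring
    have hconv := strictConvexOn_exp.2 (Set.mem_univ (-(d₁/θ₂))) (Set.mem_univ (-(d₃/θ₂)))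
      hne (by positivity) (by positivity) hab
    rw [smul_eq_mul, smul_eq_mul, smul_eq_mul, smul_eq_mul] at hconv
    have harg : (d₃-d₂)/(d₃-d₁) * (-(d₁/θ₂)) + (d₂-d₁)/(d₃-d₁) * (-(d₃/θ₂)) = -(d₂/θ₂) := by
      field_simp
      ring
    rw [harg, Real.exp_neg, Real.exp_neg, Real.exp_neg, ← he₁def, ← he₂def, ← he₃def] at hconv
    have hkey : (d₃-d₁)*(e₁*e₃) < (d₃-d₂)*(e₂*e₃) + (d₂-d₁)*(e₁*e₂) := by
      have h1 := he₁.ne'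
      have h2 := he₂.ne'
      have h3 := he₃.ne'
      rw [div_mul_eq_mul_div, div_mul_eq_mul_div, ← add_div] at hconv
      field_simp at hconv
      nlinarith [hconv]
    intro hzero
    linarith [hkey]
  have hu : IsUnit A := (Matrix.isUnit_iff_isUnit_det A).2 (isUnit_iff_ne_zero.2 hdet)
  exact Matrix.linearIndependent_rows_iff_isUnit.2 hu
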